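/- Let td(x) := x/(1 − exp(−x)) = Σ_{n≥0} ((−1)^n B_n / n!) x^n ∈ Q[[x]], where B_n are the Bernoulli numbers. Then for every natural number n, the rational number T_n · (−1)^n B_n / n! is an integer, where T_n := Π_{p prime} p^{⌊n/(p−1)⌋}. -/

import Mathlib

/-- `T n = Π_{p prime} p^{⌊n/(p−1)⌋}`. -/
def integralToddDenom (n : ℕ) : ℕ :=
  ∏ p ∈ (Finset.range (n + 2)).filter Nat.Prime, p ^ (n / (p - 1))

lemma todd_pos (n : ℕ) : 0 < integralToddDenom n :=
  Finset.prod_pos fun _p hp => pow_pos (Finset.mem_filter.mp hp).2.pos _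

lemma todd_factorization (n : ℕ) {q : ℕ} (hq : q.Prime) :
    (integralToddDenom n).factorization q = n / (q - 1) := by
  unfold integralToddDenom
  rw [Nat.factorization_prod fun p hp => (pow_pos (Finset.mem_filter.mp hp).2.pos _).ne']
  rw [Finset.sum_apply']
  by_cases hqn : q ∈ (Finset.range (n + 2)).filter Nat.Prime
  · rw [Finset.sum_eq_single q]
    · rw [(Finset.mem_filter.mp hqn).2.factorization_pow, Finsupp.single_eq_same]
    · intro p hp hpq
      rw [(Finset.mem_filter.mp hp).2.factorization_pow, Finsupp.single_eq_of_ne' hpq]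
    · exact fun h => absurd hqn h
  · have h1 : ∀ p ∈ (Finset.range (n + 2)).filter Nat.Prime,
        ((p ^ (n / (p - 1))).factorization) q = 0 := by
      intro p hp
      rw [(Finset.mem_filter.mp hp).2.factorization_pow, Finsupp.single_eq_of_ne]
      rintro rfl; exact hqn hp
    rw [Finset.sum_eq_zero h1]
    have hlarge : n + 2 ≤ q := by
      by_contra h
      exact hqn (Finset.mem_filter.mpr ⟨Finset.mem_range.mpr (by omega), hq⟩)
    symm
    exact Nat.div_eq_of_lt (by omega)

lemma digits_sum_pos {q m : ℕ} (hm : m ≠ 0) : 1 ≤ (q.digits m).sum := by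
  have hne : q.digits m ≠ [] := Nat.digits_ne_nil_iff_ne_zero.mpr hm
  have hmem := List.getLast_mem hne
  have hlast := Nat.getLast_digit_ne_zero q hm
  have := List.single_le_sum (fun x _ => Nat.zero_le x) _ hmem
  omega

lemma fact_factorization_le {q : ℕ} (hq : q.Prime) (j : ℕ) :
    ((j + 1).factorial).factorization q ≤ j / (q - 1) := by
  have : Fact q.Prime := ⟨hq⟩
  have h2 := hq.two_le
  rw [Nat.le_div_iff_mul_le (by omega : 0 < q - 1), Nat.factorization_def _ hq, mul_comm]
  have h := sub_one_mul_padicValNat_factorial (p := q) (j + 1)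
  have hd : 1 ≤ (q.digits (j + 1)).sum := digits_sum_pos (by omega)
  omega

lemma fact_dvd_todd (m : ℕ) : m.factorial ∣ integralToddDenom m := by
  rw [← Nat.factorization_le_iff_dvd (Nat.factorial_ne_zero m) (todd_pos m).ne']
  rw [Finsupp.le_def]
  intro q
  by_cases hq : q.Prime
  · rw [todd_factorization m hq]
    cases m with
    | zero => simp
    | succ j =>
        exact le_trans (fact_factorization_le hq j) (Nat.div_le_div_right (Nat.le_succ j))
  · simp [Nat.factorization_eq_zero_of_not_prime _ hq]

lemma mul_dvd_todd {m j : ℕ} (hj : j ≤ m) :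
    (j + 1).factorial * integralToddDenom (m - j) ∣ integralToddDenom m := by
  rw [← Nat.factorization_le_iff_dvd
      (mul_ne_zero (Nat.factorial_ne_zero _) (todd_pos _).ne') (todd_pos m).ne',
    Nat.factorization_mul (Nat.factorial_ne_zero _) (todd_pos _).ne', Finsupp.le_def]
  intro q
  by_cases hq : q.Prime
  · rw [Finsupp.add_apply, todd_factorization _ hq, todd_factorization _ hq]
    have h2 := hq.two_le
    have h1 := fact_factorization_le hq j
    have ha := Nat.div_mul_le_self j (q - 1)
    have hb := Nat.div_mul_le_self (m - j) (q - 1)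
    have hc : (j / (q - 1) + (m - j) / (q - 1)) * (q - 1) ≤ m := by
      rw [add_mul]; omega
    have hd := Nat.le_div_iff_mul_le (by omega : 0 < q - 1) |>.mpr hc
    omega
  · simp [Nat.factorization_eq_zero_of_not_prime _ hq]

lemma bern_rec (m : ℕ) :
    bernoulli' m / (m.factorial : ℚ) = 1 / (m.factorial : ℚ) -
      ∑ i ∈ Finset.range m,
        bernoulli' i / ((i.factorial : ℚ) * ((m + 1 - i).factorial : ℚ)) := by
  have h := sum_bernoulli' (m + 1)
  rw [Finset.sum_range_succ] at h
  have hc : (((m + 1).choose m : ℕ) : ℚ) = (m : ℚ) + 1 := by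
    rw [Nat.choose_succ_self_right]; push_cast; ring
  have hm : ((m.factorial : ℕ) : ℚ) ≠ 0 := Nat.cast_ne_zero.mpr (Nat.factorial_ne_zero m)
  have key : ∀ i ∈ Finset.range m, (((m + 1).choose i : ℕ) : ℚ) * bernoulli' i
      = ((m + 1).factorial : ℚ) *
        (bernoulli' i / ((i.factorial : ℚ) * ((m + 1 - i).factorial : ℚ))) := by
    intro i hi
    have him : i < m := Finset.mem_range.mp hi
    have hle : i ≤ m + 1 := by omega
    have hi0 : ((i.factorial : ℕ) : ℚ) ≠ 0 := Nat.cast_ne_zero.mpr (Nat.factorial_ne_zero i)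
    have hi1 : (((m + 1 - i).factorial : ℕ) : ℚ) ≠ 0 :=
      Nat.cast_ne_zero.mpr (Nat.factorial_ne_zero _)
    rw [Nat.cast_choose ℚ hle]
    field_simp
    try ring
  rw [Finset.sum_congr rfl key, ← Finset.mul_sum, hc] at h
  set S : ℚ := ∑ i ∈ Finset.range m,
      bernoulli' i / ((i.factorial : ℚ) * ((m + 1 - i).factorial : ℚ)) with hS
  have hfac : (((m + 1).factorial : ℕ) : ℚ) = ((m : ℚ) + 1) * (m.factorial : ℚ) := by
    rw [Nat.factorial_succ]; push_cast; ring
  rw [hfac] at h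
  have hm1 : ((m : ℚ) + 1) ≠ 0 := by positivity
  have h3 : bernoulli' m = 1 - (m.factorial : ℚ) * S := by
    apply mul_left_cancel₀ hm1
    push_cast at h ⊢
    linear_combination h
  rw [h3, sub_div, mul_div_cancel_left₀ _ hm]

lemma todd_mul_bernoulli'_int (n : ℕ) :
    ∃ z : ℤ, (integralToddDenom n : ℚ) * (bernoulli' n / (n.factorial : ℚ)) = z := by
  induction n using Nat.strong_induction_on with
  | _ m ih =>
    obtain ⟨Z, hZ⟩ : ∃ Z : ℕ → ℤ, ∀ i, i < m →
        (integralToddDenom i : ℚ) * (bernoulli' i / (i.factorial : ℚ)) = Z i := by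
      choose Z hZ using fun i => ih i
      exact ⟨fun i => if h : i < m then Z i h else 0,
        fun i h => by simp only [dif_pos h]; exact hZ i h⟩
    refine ⟨(integralToddDenom m / m.factorial : ℕ) - ∑ i ∈ Finset.range m,
      ((integralToddDenom m / ((m + 1 - i).factorial * integralToddDenom i) : ℕ) : ℤ) * Z i, ?_⟩
    rw [bern_rec m, mul_sub, Finset.mul_sum]
    have e1 : (integralToddDenom m : ℚ) * (1 / (m.factorial : ℚ))
        = ((integralToddDenom m / m.factorial : ℕ) : ℚ) := by
      rw [Nat.cast_div (fact_dvd_todd m) (Nat.cast_ne_zero.mpr (Nat.factorial_ne_zero m))]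
      rw [mul_one_div]
    have e2 : ∀ i ∈ Finset.range m,
        (integralToddDenom m : ℚ) *
          (bernoulli' i / ((i.factorial : ℚ) * ((m + 1 - i).factorial : ℚ)))
        = ((integralToddDenom m / ((m + 1 - i).factorial * integralToddDenom i) : ℕ) : ℚ) *
            ((Z i : ℤ) : ℚ) := by
      intro i hi
      have him : i < m := Finset.mem_range.mp hi
      have hdvd : (m + 1 - i).factorial * integralToddDenom i ∣ integralToddDenom m := by
        have h := mul_dvd_todd (m := m) (j := m - i) (Nat.sub_le m i)
        have h1 : m - (m - i) = i := by omega
        have h2 : m - i + 1 = m + 1 - i := by omega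
        rwa [h1, h2] at h
      have hTi : (integralToddDenom i : ℚ) ≠ 0 := Nat.cast_ne_zero.mpr (todd_pos i).ne'
      have hf : (((m + 1 - i).factorial : ℕ) : ℚ) ≠ 0 :=
        Nat.cast_ne_zero.mpr (Nat.factorial_ne_zero _)
      have hif : ((i.factorial : ℕ) : ℚ) ≠ 0 := Nat.cast_ne_zero.mpr (Nat.factorial_ne_zero i)
      rw [Nat.cast_div hdvd (by push_cast; exact mul_ne_zero hf hTi), ← hZ i him]
      push_cast
      field_simp
      try ring
    rw [e1, Finset.sum_congr rfl e2]
    simp only [Int.cast_sub, Int.cast_sum, Int.cast_mul, Int.cast_natCast]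

/-- `T_n · (−1)^n B_n / n!` is an integer, where `B_n` is the
`n`-th Bernoulli number (convention `x/(e^x−1) = Σ B_n x^n/n!`). -/
theorem integralToddDenom_mul_bernoulli_int (n : ℕ) :
    ∃ z : ℤ,
      (integralToddDenom n : ℚ) * ((-1) ^ n * bernoulli n / (n.factorial : ℚ)) = z := by
  rw [show ((-1 : ℚ)) ^ n * bernoulli n = bernoulli' n from (bernoulli'_eq_bernoulli n).symm]
  exact todd_mul_bernoulli'_int n
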